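/- Let X be a Banach space and M ∈ L(X) ⊗^γ L(X) satisfy (T⊗1)M = M(1⊗T) for every rank-one T ∈ L(X). If moreover M is symmetric (invariant under the flip on L(X) ⊗^γ L(X)), then there is a scalar λ with M^op = λ F_X, where M^op = Υ(M) and F_X is the flip on X ⊗^γ X. -/

import Mathlib

noncomputable def biev {X : Type} [NormedAddCommGroup X] [NormedSpace ℂ X]
    (φ : X →L[ℂ] X →L[ℂ] ℂ) (x y : X) :
    (X →L[ℂ] X) →L[ℂ] (X →L[ℂ] X) →L[ℂ] ℂ :=
  ((ContinuousLinearMap.compL ℂ (X →L[ℂ] X) X ℂ).flip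
      (ContinuousLinearMap.apply ℂ X y)).comp
    (φ.comp (ContinuousLinearMap.apply ℂ X x))

lemma biev_apply {X : Type} [NormedAddCommGroup X] [NormedSpace ℂ X]
    (φ : X →L[ℂ] X →L[ℂ] ℂ) (x y : X) (A B : X →L[ℂ] X) :
    biev φ x y A B = φ (A x) (B y) := rfl

/-- let `M = Σ Tₙ ⊗ Sₙ ∈ L(X) ⊗^γ L(X)` satisfy
`(T⊗1)M = M(1⊗T)` for every rank-one `T` (equality in `L(X) ⊗^γ L(X)` being
tested against all bounded bilinear functionals, which separate its points).
If `M` is moreover symmetric, then `M^op = λ F_X` for some scalar `λ`, i.e.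
`Σ φ(Tₙ x, Sₙ y) = λ φ(y, x)` for every bounded bilinear functional `φ` on
`X × X` (such functionals separate the points of `X ⊗^γ X`). -/
theorem symmetric_hypercommutator_is_scalar_flip
    (X : Type) [NormedAddCommGroup X] [NormedSpace ℂ X] [CompleteSpace X]
    (T S : ℕ → X →L[ℂ] X)
    (hsum : Summable fun n => ‖T n‖ * ‖S n‖)
    (hcomm : ∀ R : X →L[ℂ] X, (∃ (f : X →L[ℂ] ℂ) (v : X), R = f.smulRight v) →
      ∀ Φ : (X →L[ℂ] X) →L[ℂ] (X →L[ℂ] X) →L[ℂ] ℂ,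
        (∑' n, Φ (R.comp (T n)) (S n)) = ∑' n, Φ (T n) ((S n).comp R))
    (hsymm : ∀ Φ : (X →L[ℂ] X) →L[ℂ] (X →L[ℂ] X) →L[ℂ] ℂ,
      (∑' n, Φ (T n) (S n)) = ∑' n, Φ (S n) (T n)) :
    ∃ lam : ℂ, ∀ φ : X →L[ℂ] X →L[ℂ] ℂ, ∀ x y,
      (∑' n, φ (T n x) (S n y)) = lam * φ y x := by
  by_cases hX : ∃ y₀ : X, y₀ ≠ 0
  · obtain ⟨y₀, hy₀⟩ := hX
    obtain ⟨f, hf1, hf2⟩ := exists_dual_vector ℂ y₀ (norm_ne_zero_iff.mpr hy₀)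
    set f₀ : X →L[ℂ] ℂ := (‖y₀‖ : ℂ)⁻¹ • f with hf₀def
    have hy₀norm : (‖y₀‖ : ℂ) ≠ 0 := by
      simp [norm_eq_zero, hy₀]
    have hf₀y₀ : f₀ y₀ = 1 := by
      simp only [hf₀def, ContinuousLinearMap.smul_apply, hf2, smul_eq_mul]
      exact inv_mul_cancel₀ hy₀norm
    -- summability of the vector series defining c x
    have s2 : ∀ x : X, Summable fun n => f₀ (T n x) • S n y₀ := by
      intro x
      apply Summable.of_norm_bounded
        (g := fun n => (‖f₀‖ * ‖x‖ * ‖y₀‖) * (‖T n‖ * ‖S n‖)) (hsum.mul_left _)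
      intro n
      rw [norm_smul]
      calc ‖f₀ (T n x)‖ * ‖S n y₀‖
          ≤ (‖f₀‖ * (‖T n‖ * ‖x‖)) * (‖S n‖ * ‖y₀‖) := by
            gcongr
            · exact (f₀.le_opNorm _).trans (by gcongr; exact (T n).le_opNorm x)
            · exact (S n).le_opNorm y₀
        _ = (‖f₀‖ * ‖x‖ * ‖y₀‖) * (‖T n‖ * ‖S n‖) := by ring
    set c : X → X := fun x => ∑' n, f₀ (T n x) • S n y₀ with hc
    -- key identity: ∑ φ(Tₙ x, Sₙ v) = φ v (c x)
    have key : ∀ φ : X →L[ℂ] X →L[ℂ] ℂ, ∀ x v,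
        (∑' n, φ (T n x) (S n v)) = φ v (c x) := by
      intro φ x v
      have h := hcomm (f₀.smulRight v) ⟨f₀, v, rfl⟩ (biev φ x y₀)
      have hL : (∑' n, biev φ x y₀ ((f₀.smulRight v).comp (T n)) (S n))
          = φ v (c x) := by
        have h1 : ∀ n, biev φ x y₀ ((f₀.smulRight v).comp (T n)) (S n)
            = φ v (f₀ (T n x) • S n y₀) := by
          intro n
          simp [biev_apply, ContinuousLinearMap.comp_apply,
            ContinuousLinearMap.smulRight_apply, map_smul]
        rw [tsum_congr h1, ← ContinuousLinearMap.map_tsum (φ v) (s2 x)]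
      have hR : (∑' n, biev φ x y₀ (T n) ((S n).comp (f₀.smulRight v)))
          = ∑' n, φ (T n x) (S n v) := by
        apply tsum_congr
        intro n
        simp [biev_apply, ContinuousLinearMap.comp_apply,
          ContinuousLinearMap.smulRight_apply, hf₀y₀, map_smul]
      rw [← hR, ← h, hL]
    -- the other identity via symmetry: ∑ φ(Tₙ x, Sₙ y) = φ (c y) x
    have key' : ∀ φ : X →L[ℂ] X →L[ℂ] ℂ, ∀ x y,
        (∑' n, φ (T n x) (S n y)) = φ (c y) x := by
      intro φ x y
      have h1 := hsymm (biev φ x y)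
      have h2 := key φ.flip y x
      simp only [biev_apply] at h1
      simp only [ContinuousLinearMap.flip_apply] at h2
      rw [h1, h2]
    refine ⟨f₀ (c y₀), fun φ x y => ?_⟩
    have hg : ∀ g : X →L[ℂ] ℂ, ∀ z, g (c z) = f₀ (c y₀) * g z := by
      intro g z
      have h3 := key (f₀.smulRight g) z y₀
      have h4 := key' (f₀.smulRight g) z y₀
      rw [h4] at h3
      simpa [ContinuousLinearMap.smulRight_apply, hf₀y₀] using h3.symm
    rw [key φ x y, hg (φ y) x]
  · push_neg at hX
    refine ⟨0, fun φ x y => ?_⟩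
    simp [hX x, hX y]
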